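/- Let X be a connected graph on which a group G acts with finitely many orbits of edges and finite edge stabilizers, and suppose X is hyperbolic and fine. Fix representatives v₁,…,vₖ of the vertex orbits. Then G is hyperbolic relative to the collection of infinite stabilizers among G_{v₁},…,G_{vₖ}. -/

import Mathlib

open Filter

universe u

/-- A graph is fine if for each edge `{a, b}` and each `n`, only finitely many
circuits (embedded cycles) of length at most `n` contain that edge. -/
def Fine {V : Type*} (G : SimpleGraph V) : Prop :=
  ∀ ⦃a b : V⦄, G.Adj a b → ∀ n : ℕ,
    {w : G.Walk a a | w.IsCycle ∧ w.length ≤ n ∧ s(a, b) ∈ w.edges}.Finite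

/-- The Gromov product in a graph, with respect to the path metric. -/
noncomputable def gpd {V : Type*} (X : SimpleGraph V) (p a b : V) : ℝ :=
  ((X.dist p a : ℝ) + (X.dist p b : ℝ) - (X.dist a b : ℝ)) / 2

/-- A graph is δ-hyperbolic (four-point inequality for its path metric). -/
def GraphHyp {V : Type*} (X : SimpleGraph V) (δ : ℝ) : Prop :=
  ∀ p a b c : V, min (gpd X p a b) (gpd X p b c) - δ ≤ gpd X p a c

/-- The conjugate of a subgroup. -/
def conjSub {Γ : Type*} [Group Γ] (g : Γ) (H : Subgroup Γ) : Subgroup Γ :=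
  Subgroup.map (MulAut.conj g).toMonoidHom H

/-- Bowditch's definition of relative hyperbolicity: `Γ` is hyperbolic relative
to the finite collection `H` if it acts on a connected, fine, hyperbolic graph
with finite edge stabilizers, finitely many orbits of edges, and vertex
stabilizers of infinite-valence vertices exactly the conjugates of the `H i`. -/
def RelativelyHyperbolic (Γ : Type*) [Group Γ] {ι : Type*} [Finite ι]
    (H : ι → Subgroup Γ) : Prop :=
  ∃ (V : Type u) (X : SimpleGraph V) (_ : MulAction Γ V),
    (∀ (g : Γ) (a b : V), X.Adj a b → X.Adj (g • a) (g • b)) ∧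
    X.Connected ∧ Fine X ∧ (∃ δ : ℝ, GraphHyp X δ) ∧
    (∀ a b : V, X.Adj a b → {g : Γ | g • a = a ∧ g • b = b}.Finite) ∧
    (∃ E₀ : Finset (V × V), ∀ a b : V, X.Adj a b →
      ∃ g : Γ, ∃ p ∈ E₀, g • p.1 = a ∧ g • p.2 = b) ∧
    (∀ v : V, (X.neighborSet v).Infinite →
      ∃ (i : ι) (g : Γ), MulAction.stabilizer Γ v = conjSub g (H i)) ∧
    (∀ i : ι, ∃ v : V, (X.neighborSet v).Infinite ∧
      MulAction.stabilizer Γ v = H i)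

section Aux

variable {Γ : Type} [Group Γ] {V : Type u}

/-- every vertex of a connected graph containing an edge has a neighbor -/
lemma exists_neighbor (X : SimpleGraph V) (hconn : X.Connected)
    {a b : V} (hab : X.Adj a b) (w : V) : ∃ c, X.Adj w c := by
  obtain ⟨p⟩ := hconn w a
  cases p with
  | nil => exact ⟨b, hab⟩
  | cons h _ => exact ⟨_, h⟩

lemma stab_infinite_of_valence (X : SimpleGraph V) [MulAction Γ V]
    (E₀ : Finset (V × V))
    (hE₀ : ∀ a b : V, X.Adj a b → ∃ g : Γ, ∃ p ∈ E₀, g • p.1 = a ∧ g • p.2 = b)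
    (w : V) (hw : (X.neighborSet w).Infinite) :
    Infinite (MulAction.stabilizer Γ w) := by
  classical
  set S : V × V → Set V := fun p => {b | ∃ g : Γ, g • p.1 = w ∧ g • p.2 = b} with hS
  have hcov : X.neighborSet w ⊆ ⋃ p ∈ (E₀ : Set (V × V)), S p := by
    intro b hb
    obtain ⟨g, p, hp, h1, h2⟩ := hE₀ w b hb
    exact Set.mem_biUnion hp ⟨g, h1, h2⟩
  have hex : ∃ p ∈ (E₀ : Set (V × V)), (S p).Infinite := by
    by_contra h
    push_neg at h
    have hfin : (⋃ p ∈ (E₀ : Set (V × V)), S p).Finite :=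
      Set.Finite.biUnion E₀.finite_toSet (fun p hp => h p hp)
    exact hw (hfin.subset hcov)
  obtain ⟨p, -, hSp⟩ := hex
  obtain ⟨b₀, g₀, hg₀1, -⟩ := hSp.nonempty
  haveI := hSp.to_subtype
  have hch : ∀ b : (S p), ∃ g : Γ, g • p.1 = w ∧ g • p.2 = (b : V) := fun b => b.2
  choose gb hgb1 hgb2 using hch
  refine Infinite.of_injective (fun b => (⟨gb b * g₀⁻¹, ?_⟩ : MulAction.stabilizer Γ w)) ?_
  · have hinv : g₀⁻¹ • w = p.1 := inv_smul_eq_iff.mpr hg₀1.symm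
    show (gb b * g₀⁻¹) • w = w
    rw [mul_smul, hinv, hgb1]
  · intro b b' h
    have h2 : gb b * g₀⁻¹ = gb b' * g₀⁻¹ := congrArg Subtype.val h
    have h3 : gb b = gb b' := mul_right_cancel h2
    apply Subtype.ext
    rw [← hgb2 b, ← hgb2 b', h3]

lemma valence_infinite_of_stab (X : SimpleGraph V) [MulAction Γ V]
    (hact : ∀ (g : Γ) (a b : V), X.Adj a b → X.Adj (g • a) (g • b))
    (hedge : ∀ a b : V, X.Adj a b → {g : Γ | g • a = a ∧ g • b = b}.Finite)
    {w b : V} (hb : X.Adj w b) (hs : Infinite (MulAction.stabilizer Γ w)) :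
    (X.neighborSet w).Infinite := by
  classical
  by_contra hfin
  rw [Set.not_infinite] at hfin
  haveI := hfin.to_subtype
  haveI := hs
  have hmem : ∀ s : MulAction.stabilizer Γ w, (s : Γ) • b ∈ X.neighborSet w := by
    intro s
    have := hact (s : Γ) w b hb
    rwa [s.2] at this
  obtain ⟨y, hy⟩ := Finite.exists_infinite_fiber
    (fun s : MulAction.stabilizer Γ w => (⟨(s : Γ) • b, hmem s⟩ : X.neighborSet w))
  haveI := hy
  set F := fun s : MulAction.stabilizer Γ w => (⟨(s : Γ) • b, hmem s⟩ : X.neighborSet w) with hF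
  have hfib : ((F ⁻¹' {y}) : Set (MulAction.stabilizer Γ w)).Infinite :=
    Set.infinite_coe_iff.mp hy
  obtain ⟨s₀, hs₀⟩ := hfib.nonempty
  haveI := hfib.to_subtype
  have hEfin := hedge w b hb
  have : Infinite {g : Γ | g • w = w ∧ g • b = b} := by
    refine Infinite.of_injective
      (fun s : (F ⁻¹' {y} : Set (MulAction.stabilizer Γ w)) =>
        (⟨(s₀ : Γ)⁻¹ * ((s : MulAction.stabilizer Γ w) : Γ), ?_, ?_⟩ :
          {g : Γ | g • w = w ∧ g • b = b})) ?_
    · show ((s₀ : Γ)⁻¹ * _) • w = w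
      rw [mul_smul, (s.1).2, inv_smul_eq_iff]
      exact s₀.2.symm
    · show ((s₀ : Γ)⁻¹ * _) • b = b
      have h1 : F s.1 = y := s.2
      have h2 : F s₀ = y := hs₀
      have h3 : ((s.1 : MulAction.stabilizer Γ w) : Γ) • b
          = ((s₀ : MulAction.stabilizer Γ w) : Γ) • b := by
        have h4 := h1.trans h2.symm
        exact congrArg Subtype.val h4
      rw [mul_smul, h3, inv_smul_smul]
    · intro s s' h
      have h2 := congrArg Subtype.val h
      simp only at h2
      have h3 := mul_left_cancel h2
      exact Subtype.ext (Subtype.ext h3)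
  exact Set.not_infinite.mpr hEfin (Set.infinite_coe_iff.mp this)

lemma infinite_of_conjSub {g : Γ} {H : Subgroup Γ}
    (h : Infinite (conjSub g H)) : Infinite H := by
  have e : H ≃* conjSub g H :=
    Subgroup.equivMapOfInjective H (MulAut.conj g).toMonoidHom (MulAut.conj g).injective
  exact (Equiv.infinite_iff e.toEquiv).mpr h

end Aux

section Star

/-- cone vertex set: a point at infinity plus a copy of the group -/
@[ext] structure StarV (Γ : Type) : Type u where
  down : Option Γ

variable {Γ : Type} [Group Γ]

instance : MulAction Γ (StarV.{u} Γ) where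
  smul g a := ⟨a.down.map (fun x => g * x)⟩
  one_smul a := by cases a with | mk o => cases o <;> simp [HSMul.hSMul, SMul.smul]
  mul_smul g h a := by cases a with | mk o => cases o <;> simp [HSMul.hSMul, SMul.smul, mul_assoc]

lemma star_smul_down (g : Γ) (a : StarV.{u} Γ) :
    (g • a).down = a.down.map (fun x => g * x) := rfl

lemma star_smul_none (g : Γ) : g • (⟨none⟩ : StarV.{u} Γ) = ⟨none⟩ := rfl

lemma star_smul_some (g x : Γ) : g • (⟨some x⟩ : StarV.{u} Γ) = ⟨some (g * x)⟩ := rfl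

lemma star_smul_down_none_iff (g : Γ) (a : StarV.{u} Γ) :
    (g • a).down = none ↔ a.down = none := by
  rw [star_smul_down]; cases a.down <;> simp

/-- the cone (star) graph on Γ ∪ {∞} -/
def starGraph (Γ : Type) : SimpleGraph (StarV.{u} Γ) where
  Adj a b := (a.down = none ∧ b.down ≠ none) ∨ (b.down = none ∧ a.down ≠ none)
  symm := ⟨fun a b h => Or.symm h⟩
  loopless := ⟨fun a h => by rcases h with ⟨h1, h2⟩ | ⟨h1, h2⟩ <;> exact h2 h1⟩

lemma star_adj_none_some (g : Γ) :
    (starGraph.{u} Γ).Adj ⟨none⟩ ⟨some g⟩ := Or.inl ⟨rfl, by simp⟩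

lemma star_closed_support_not_nodup {a : StarV.{u} Γ}
    (c : (starGraph.{u} Γ).Walk a a) (h : ¬ c.Nil) : ¬ c.support.Nodup := by
  cases c with
  | nil => exact absurd SimpleGraph.Walk.nil_nil h
  | cons h' p =>
    rw [SimpleGraph.Walk.support_cons]
    intro hnd
    exact (List.nodup_cons.mp hnd).1 p.end_mem_support

lemma star_no_cycle {a : StarV.{u} Γ} (c : (starGraph.{u} Γ).Walk a a) :
    ¬ c.IsCycle := by
  intro hc
  have h3 := hc.three_le_length
  have hnd : c.support.tail.Nodup := hc.2
  cases c with
  | nil => simp at h3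
  | cons h₁ p₁ =>
    rename_i b
    cases p₁ with
    | nil => simp at h3
    | cons h₂ p₂ =>
      rename_i d
      by_cases ha : a.down = none
      · -- b ≠ none, so d = none = a, and p₂ is a closed nonnil walk at a
        have hb : b.down ≠ none := by
          rcases h₁ with ⟨-, h⟩ | ⟨h, h'⟩
          · exact h
          · exact absurd ha h'
        have hd : d.down = none := by
          rcases h₂ with ⟨h, -⟩ | ⟨h, -⟩
          · exact absurd h hb
          · exact h
        have hda : d = a := StarV.ext (hd.trans ha.symm)
        subst hda
        have hlen : ¬ p₂.Nil := by
          rw [SimpleGraph.Walk.nil_iff_length_eq]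
          simp only [SimpleGraph.Walk.length_cons] at h3
          omega
        have hnn := star_closed_support_not_nodup p₂ hlen
        rw [SimpleGraph.Walk.support_cons, SimpleGraph.Walk.support_cons] at hnd
        simp only [List.tail_cons] at hnd
        exact hnn (List.nodup_cons.mp hnd).2
      · -- a ≠ none, so b = none, d ≠ none; third step returns to b
        have hb : b.down = none := by
          rcases h₁ with ⟨h, -⟩ | ⟨h, -⟩
          · exact absurd h ha
          · exact h
        have hd : d.down ≠ none := by
          rcases h₂ with ⟨-, h⟩ | ⟨h, h'⟩
          · exact h
          · exact absurd hb h'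
        cases p₂ with
        | nil =>
          simp only [SimpleGraph.Walk.length_cons, SimpleGraph.Walk.length_nil] at h3
          omega
        | cons h₃ p₃ =>
          rename_i e
          have he : e.down = none := by
            rcases h₃ with ⟨h, -⟩ | ⟨h, -⟩
            · exact absurd h hd
            · exact h
          have heb : e = b := StarV.ext (he.trans hb.symm)
          subst heb
          rw [SimpleGraph.Walk.support_cons, SimpleGraph.Walk.support_cons,
            SimpleGraph.Walk.support_cons] at hnd
          simp only [List.tail_cons] at hnd
          exact (List.nodup_cons.mp hnd).1 (List.mem_cons_of_mem _ p₃.start_mem_support)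

lemma star_reach_none (a : StarV.{u} Γ) : (starGraph.{u} Γ).Reachable a ⟨none⟩ := by
  rcases ha : a.down with _ | g
  · have h1 : a = ⟨none⟩ := StarV.ext ha
    rw [h1]
  · have h1 : a = ⟨some g⟩ := StarV.ext ha
    rw [h1]
    exact (star_adj_none_some g).symm.reachable

lemma star_connected : (starGraph.{u} Γ).Connected := by
  rw [SimpleGraph.connected_iff]
  exact ⟨fun a b => (star_reach_none a).trans (star_reach_none b).symm, ⟨⟨none⟩⟩⟩

lemma star_dist_le (a b : StarV.{u} Γ) : (starGraph.{u} Γ).dist a b ≤ 2 := by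
  rcases ha : a.down with _ | g <;> rcases hb : b.down with _ | h
  · have h1 : a = b := StarV.ext (ha.trans hb.symm)
    rw [h1, SimpleGraph.dist_self]; omega
  · have h1 : a = ⟨none⟩ := StarV.ext ha
    have h2 : b = ⟨some h⟩ := StarV.ext hb
    subst h1; subst h2
    have h4 := SimpleGraph.dist_le
      (SimpleGraph.Walk.cons (star_adj_none_some h) SimpleGraph.Walk.nil)
    simpa using h4.trans (by norm_num)
  · have h1 : a = ⟨some g⟩ := StarV.ext ha
    have h2 : b = ⟨none⟩ := StarV.ext hb
    subst h1; subst h2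
    have h4 := SimpleGraph.dist_le
      (SimpleGraph.Walk.cons (star_adj_none_some g).symm SimpleGraph.Walk.nil)
    simpa using h4.trans (by norm_num)
  · have h1 : a = ⟨some g⟩ := StarV.ext ha
    have h2 : b = ⟨some h⟩ := StarV.ext hb
    subst h1; subst h2
    have h4 := SimpleGraph.dist_le
      (SimpleGraph.Walk.cons (star_adj_none_some g).symm
        (SimpleGraph.Walk.cons (star_adj_none_some h) SimpleGraph.Walk.nil))
    simpa using h4

lemma star_hyp : GraphHyp (starGraph.{u} Γ) 3 := by
  intro p a b c
  have d1 : ((starGraph.{u} Γ).dist p a : ℝ) ≤ 2 := by exact_mod_cast star_dist_le p a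
  have d2 : ((starGraph.{u} Γ).dist p b : ℝ) ≤ 2 := by exact_mod_cast star_dist_le p b
  have d3 : ((starGraph.{u} Γ).dist a c : ℝ) ≤ 2 := by exact_mod_cast star_dist_le a c
  have n1 : (0 : ℝ) ≤ ((starGraph.{u} Γ).dist a b : ℝ) := Nat.cast_nonneg _
  have n2 : (0 : ℝ) ≤ ((starGraph.{u} Γ).dist p a : ℝ) := Nat.cast_nonneg _
  have n3 : (0 : ℝ) ≤ ((starGraph.{u} Γ).dist p c : ℝ) := Nat.cast_nonneg _
  have hle : min (gpd (starGraph.{u} Γ) p a b) (gpd (starGraph.{u} Γ) p b c)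
      ≤ gpd (starGraph.{u} Γ) p a b := min_le_left _ _
  unfold gpd at *
  nlinarith [hle]

lemma star_stab_none : MulAction.stabilizer Γ (⟨none⟩ : StarV.{u} Γ) = ⊤ := by
  rw [eq_top_iff]
  intro g _
  exact star_smul_none g

end Star

/-- a group acting on a connected, fine, hyperbolic graph with
finitely many orbits of edges and finite edge stabilizers is hyperbolic
relative to the infinite stabilizers of orbit representatives of vertices. -/
theorem relatively_hyperbolic_of_action_on_fine_graph {Γ : Type} [Group Γ]
    {V : Type u} (X : SimpleGraph V) [MulAction Γ V]
    (hact : ∀ (g : Γ) (a b : V), X.Adj a b → X.Adj (g • a) (g • b))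
    (hconn : X.Connected) (hfine : Fine X) (δ : ℝ) (hhyp : GraphHyp X δ)
    (hedge : ∀ a b : V, X.Adj a b → {g : Γ | g • a = a ∧ g • b = b}.Finite)
    (heorb : ∃ E₀ : Finset (V × V), ∀ a b : V, X.Adj a b →
      ∃ g : Γ, ∃ p ∈ E₀, g • p.1 = a ∧ g • p.2 = b)
    (k : ℕ) (v : Fin k → V)
    (hrep : ∀ w : V, ∃ (i : Fin k) (g : Γ), g • v i = w) :
    RelativelyHyperbolic.{u} Γ
      (fun i : {i : Fin k // Infinite (MulAction.stabilizer Γ (v i))} =>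
        MulAction.stabilizer Γ (v i.1)) := by
  classical
  obtain ⟨E₀, hE₀⟩ := heorb
  by_cases hE : ∃ a b : V, X.Adj a b
  · obtain ⟨a₀, b₀, hab⟩ := hE
    refine ⟨V, X, inferInstance, hact, hconn, hfine, ⟨δ, hhyp⟩, hedge, ⟨E₀, hE₀⟩, ?_, ?_⟩
    · intro w hw
      obtain ⟨i, g, hg⟩ := hrep w
      have hstab : MulAction.stabilizer Γ w = conjSub g (MulAction.stabilizer Γ (v i)) := by
        rw [← hg]
        exact MulAction.stabilizer_smul_eq_stabilizer_map_conj g (v i)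
      have hinfw : Infinite (MulAction.stabilizer Γ w) :=
        stab_infinite_of_valence X E₀ hE₀ w hw
      rw [hstab] at hinfw
      exact ⟨⟨i, infinite_of_conjSub hinfw⟩, g, hstab⟩
    · intro i
      refine ⟨v i.1, ?_, rfl⟩
      obtain ⟨c, hc⟩ := exists_neighbor X hconn hab (v i.1)
      exact valence_infinite_of_stab X hact hedge hc i.2
  · -- no edges: V is a subsingleton
    push_neg at hE
    have hsub : ∀ a b : V, a = b := by
      intro a b
      obtain ⟨p⟩ := hconn a b
      cases p with
      | nil => rfl
      | cons h _ => exact absurd h (hE _ _)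
    have hstabtop : ∀ i : Fin k, MulAction.stabilizer Γ (v i) = ⊤ := by
      intro i
      rw [eq_top_iff]
      intro g _
      exact hsub _ _
    refine ⟨StarV.{u} Γ, starGraph.{u} Γ, inferInstance,
      ?_, star_connected, ?_, ⟨3, star_hyp⟩, ?_, ?_, ?_, ?_⟩
    · -- action by graph automorphisms
      intro g a b h
      rcases h with ⟨h1, h2⟩ | ⟨h1, h2⟩
      · exact Or.inl ⟨(star_smul_down_none_iff g a).mpr h1,
          fun hc => h2 ((star_smul_down_none_iff g b).mp hc)⟩
      · exact Or.inr ⟨(star_smul_down_none_iff g b).mpr h1,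
          fun hc => h2 ((star_smul_down_none_iff g a).mp hc)⟩
    · -- fine: there are no cycles at all
      intro a b _ n
      refine Set.Finite.subset Set.finite_empty ?_
      intro c hc
      exact absurd hc.1 (star_no_cycle c)
    · -- finite edge stabilizers
      intro a b h
      have hsome : ∀ (x : Γ) (c : StarV.{u} Γ), c.down = some x →
          {g : Γ | g • a = a ∧ g • b = b} ⊆ ({1} : Set Γ) → True := fun _ _ _ _ => trivial
      rcases h with ⟨h1, h2⟩ | ⟨h1, h2⟩
      · -- b is a some
        cases hb0 : b.down with
        | none => exact absurd hb0 h2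
        | some x =>
          refine Set.Finite.subset (Set.finite_singleton 1) ?_
          rintro g ⟨-, hg2⟩
          have hb1 : b = ⟨some x⟩ := StarV.ext hb0
          rw [hb1, star_smul_some] at hg2
          have := congrArg StarV.down hg2
          simp only at this
          have hx : g * x = x := Option.some.inj this
          have : g = 1 := by
            have := mul_right_cancel (hx.trans (one_mul x).symm)
            exact this
          exact this
      · -- a is a some
        cases ha0 : a.down with
        | none => exact absurd ha0 h2
        | some x =>
          refine Set.Finite.subset (Set.finite_singleton 1) ?_
          rintro g ⟨hg1, -⟩
          have ha1 : a = ⟨some x⟩ := StarV.ext ha0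
          rw [ha1, star_smul_some] at hg1
          have := congrArg StarV.down hg1
          simp only at this
          have hx : g * x = x := Option.some.inj this
          have : g = 1 := mul_right_cancel (hx.trans (one_mul x).symm)
          exact this
    · -- finitely many orbits of edges
      refine ⟨{(⟨none⟩, ⟨some 1⟩), (⟨some 1⟩, ⟨none⟩)}, ?_⟩
      intro a b h
      rcases h with ⟨h1, h2⟩ | ⟨h1, h2⟩
      · cases hb0 : b.down with
        | none => exact absurd hb0 h2
        | some x =>
          refine ⟨x, (⟨none⟩, ⟨some 1⟩), by simp, ?_, ?_⟩
          · rw [star_smul_none]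
            exact (StarV.ext h1).symm
          · rw [star_smul_some, mul_one]
            exact (StarV.ext hb0).symm
      · cases ha0 : a.down with
        | none => exact absurd ha0 h2
        | some x =>
          refine ⟨x, (⟨some 1⟩, ⟨none⟩), by simp, ?_, ?_⟩
          · rw [star_smul_some, mul_one]
            exact (StarV.ext ha0).symm
          · rw [star_smul_none]
            exact (StarV.ext h1).symm
    · -- infinite-valence vertices have conjugate stabilizers
      intro w hw
      have hwnone : w = (⟨none⟩ : StarV.{u} Γ) := by
        cases hw0 : w.down with
        | none => exact StarV.ext hw0
        | some x =>
          exfalso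
          have hsub' : (starGraph.{u} Γ).neighborSet w ⊆ {(⟨none⟩ : StarV.{u} Γ)} := by
            intro b hb
            rcases hb with ⟨h1, -⟩ | ⟨h1, -⟩
            · rw [hw0] at h1; exact absurd h1 (by simp)
            · exact StarV.ext h1
          exact hw (Set.Finite.subset (Set.finite_singleton _) hsub')
      subst hwnone
      haveI := hw.to_subtype
      have hex : ∀ b : ((starGraph.{u} Γ).neighborSet ⟨none⟩),
          ∃ x : Γ, (b : StarV.{u} Γ).down = some x := by
        intro b
        rcases b.2 with ⟨-, h2⟩ | ⟨-, h2⟩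
        · rcases Option.ne_none_iff_exists.mp h2 with ⟨x, hx⟩
          exact ⟨x, hx.symm⟩
        · exact absurd rfl h2
      choose f hf using hex
      have hΓ : Infinite Γ := by
        refine Infinite.of_injective f ?_
        intro b b' h
        apply Subtype.ext
        apply StarV.ext
        rw [hf b, hf b', h]
      obtain ⟨w₀⟩ := hconn.nonempty
      obtain ⟨i₀, -, -⟩ := hrep w₀
      have hinf₀ : Infinite (MulAction.stabilizer Γ (v i₀)) := by
        rw [hstabtop i₀]
        exact (Equiv.infinite_iff Subgroup.topEquiv.toEquiv).mpr hΓ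
      refine ⟨⟨i₀, hinf₀⟩, 1, ?_⟩
      rw [star_stab_none]
      show (⊤ : Subgroup Γ) = conjSub 1 (MulAction.stabilizer Γ (v i₀))
      rw [hstabtop i₀]
      exact (Subgroup.map_top_of_surjective _ (MulAut.conj (1 : Γ)).surjective).symm
    · -- each subgroup in the family is realized
      intro i
      have hΓ : Infinite Γ := by
        have hi := i.2
        rw [hstabtop i.1] at hi
        exact (Equiv.infinite_iff Subgroup.topEquiv.toEquiv).mp hi
      refine ⟨⟨none⟩, ?_, ?_⟩
      · exact Set.infinite_of_injective_forall_mem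
          (f := fun g : Γ => (⟨some g⟩ : StarV.{u} Γ))
          (fun g g' h => by
            have := congrArg StarV.down h
            simpa using this)
          (fun g => star_adj_none_some.{u} g)
      · show MulAction.stabilizer Γ ((⟨none⟩ : StarV.{u} Γ)) = MulAction.stabilizer Γ (v i.1)
        rw [star_stab_none, hstabtop i.1]
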